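/- Let k and N > 1 be integers. Suppose the complete graph K_N is factorable into spanning subgraphs H₁,…,H_k, where for each i ∈ {1,…,k}, H_i is isomorphic to the disjoint union of r_i copies of K_{q_i+1} and n_i − r_i copies of K_{q_i}, for non-negative integers n_i, q_i, r_i satisfying N = n_i q_i + r_i and 0 ≤ r_i < n_i. Assume further that (n_i − r_i − 1)·q_i > 0 for some i ∈ {1,…,k}. Then R̄(n₁+1, n₂+1, …, n_k+1) = N+1. -/

import Mathlib

open Finset

/-- The color-`i` graph `f⁻¹(i)` of an edge `k`-coloring `f` of the complete
graph on `Fin n`. -/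
def colorGraph {n k : ℕ} (f : Sym2 (Fin n) → Fin k) (i : Fin k) :
    SimpleGraph (Fin n) where
  Adj x y := x ≠ y ∧ f s(x, y) = i
  symm := by
    refine ⟨?_⟩
    rintro x y ⟨hxy, hf⟩
    exact ⟨hxy.symm, by rwa [Sym2.eq_swap]⟩
  loopless := by refine ⟨?_⟩; rintro x ⟨h, -⟩; exact h rfl

/-- `α_i(f) ≥ m` : the graph `f⁻¹(i)` has an independent set of size `m`. -/
def HasIndep {n k : ℕ} (f : Sym2 (Fin n) → Fin k) (i : Fin k) (m : ℕ) : Prop :=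
  ∃ s : Finset (Fin n), s.card = m ∧ ∀ x ∈ s, ∀ y ∈ s, x ≠ y → f s(x, y) ≠ i

/-- `ω_i(f) ≥ m` : the graph `f⁻¹(i)` has a clique of size `m`. -/
def HasClique {n k : ℕ} (f : Sym2 (Fin n) → Fin k) (i : Fin k) (m : ℕ) : Prop :=
  ∃ s : Finset (Fin n), s.card = m ∧ ∀ x ∈ s, ∀ y ∈ s, x ≠ y → f s(x, y) = i

/-- The complementary Ramsey number `R̄(m 0, …, m (k-1))`: the least `n` such
that every edge `k`-coloring of `K_n` admits a color `i` with `α_i(f) ≥ m i`. -/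
noncomputable def cRamsey {k : ℕ} (m : Fin k → ℕ) : ℕ :=
  sInf {n : ℕ | ∀ f : Sym2 (Fin n) → Fin k, ∃ i : Fin k, HasIndep f i (m i)}

/-- `R̄(m; k)`, i.e. `R̄(m, …, m)` with `m` repeated `k` times. -/
noncomputable def cRamseyU (m k : ℕ) : ℕ := cRamsey (fun _ : Fin k => m)

/-- The classical multicolor Ramsey number `R(m 0, …, m (k-1))`. -/
noncomputable def ramsey {k : ℕ} (m : Fin k → ℕ) : ℕ :=
  sInf {n : ℕ | ∀ f : Sym2 (Fin n) → Fin k, ∃ i : Fin k, HasClique f i (m i)}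

/-- `G` is the disjoint union of `r` copies of `K_{q+1}` and `n - r` copies of
`K_q`: there is a partition of the vertices into `n` parts, `r` of size `q+1`
and `n - r` of size `q`, with two vertices adjacent iff they are distinct and
lie in a common part. -/
def IsCliquePartition {N : ℕ} (G : SimpleGraph (Fin N)) (n q r : ℕ) : Prop :=
  ∃ P : Fin N → Fin n,
    (∀ x y, G.Adj x y ↔ x ≠ y ∧ P x = P y) ∧
    ∀ j : Fin n,
      (Finset.univ.filter (fun x => P x = j)).card = if (j : ℕ) < r then q + 1 else q

/-- The family `H` of spanning subgraphs is a factorization of the complete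
graph: every edge of `K_N` lies in exactly one of the `H i`. -/
def IsFactorization {N k : ℕ} (H : Fin k → SimpleGraph (Fin N)) : Prop :=
  ∀ x y : Fin N, x ≠ y → ∃! i : Fin k, (H i).Adj x y

/-- `f_i(x)`: the number of vertices `y ≠ x` with `f({x, y}) = i`. -/
def degColor {n k : ℕ} (f : Sym2 (Fin n) → Fin k) (i : Fin k) (x : Fin n) : ℕ :=
  (Finset.univ.filter (fun y => y ≠ x ∧ f s(x, y) = i)).card

/-- `t̄_n(m)`: the number of edges of `T̄_n(m) = r K_{q+1} ∪ (n-r) K_q`, where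
`m = n * q + r` with `0 ≤ r < n`. -/
def tbar (n m : ℕ) : ℕ :=
  (m % n) * Nat.choose (m / n + 1) 2 + (n - m % n) * Nat.choose (m / n) 2

namespace CRAux


lemma sum_fin_ite (n r a b : ℕ) (hr : r ≤ n) :
    (∑ j : Fin n, if (j : ℕ) < r then a else b) = r * a + (n - r) * b := by
  rw [Fin.sum_univ_eq_sum_range (fun j => if j < r then a else b) n]
  rw [Finset.sum_ite]
  have h1 : (Finset.range n).filter (fun j => j < r) = Finset.range r := by
    ext j; simp only [mem_filter, mem_range]; omega
  have h2 : ((Finset.range n).filter (fun j => ¬ j < r)).card = n - r := by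
    have h3 := Finset.card_filter_add_card_filter_not
      (s := Finset.range n) (p := fun j => j < r)
    rw [h1] at h3
    simp only [Finset.card_range] at h3 ⊢
    omega
  rw [h1]
  rw [Finset.sum_const, Finset.sum_const, smul_eq_mul, smul_eq_mul, Finset.card_range]
  have h4 : (filter (fun x => ¬x < r) (range n)).card = n - r := h2
  rw [h4]

lemma two_choose_two (x : ℕ) : (x.choose 2) * 2 = x * (x - 1) := by
  rw [Nat.choose_two_right]
  refine Nat.div_mul_cancel ?_
  rcases x with _ | m
  · simp
  · simpa [Nat.succ_sub_one, mul_comm] using (Nat.even_mul_succ_self m).two_dvd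

def bal (n m : ℕ) (j : ℕ) : ℕ := if j < m % n then m / n + 1 else m / n

lemma sum_bal (n m : ℕ) (hn : 0 < n) : (∑ j : Fin n, bal n m (j : ℕ)) = m := by
  unfold bal
  rw [sum_fin_ite n (m % n) _ _ (le_of_lt (Nat.mod_lt m hn))]
  have h1 := Nat.div_add_mod m n
  have h2 : m % n ≤ n := le_of_lt (Nat.mod_lt m hn)
  set q := m / n
  set r := m % n
  have h3 : r * (q + 1) + (n - r) * q = (r + (n - r)) * q + r := by ring
  rw [h3]
  have h4 : r + (n - r) = n := by omega
  rw [h4]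
  omega

lemma sumC_bal (n m : ℕ) (hn : 0 < n) :
    (∑ j : Fin n, (bal n m (j : ℕ)).choose 2) = tbar n m := by
  unfold bal
  have h : ∀ j : Fin n, (if (j : ℕ) < m % n then m / n + 1 else m / n).choose 2
      = if (j : ℕ) < m % n then (m / n + 1).choose 2 else (m / n).choose 2 := by
    intro j; split <;> rfl
  rw [Finset.sum_congr rfl (fun j _ => h j),
    sum_fin_ite n (m % n) _ _ (le_of_lt (Nat.mod_lt m hn))]
  rfl

lemma choose_two_eq_sum_range (L W : ℕ) (h : L ≤ W) :
    L.choose 2 = ∑ w ∈ range W, (L - (w + 1)) := by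
  have h0 : ∑ w ∈ range W, (L - (w + 1)) = ∑ w ∈ range L, (L - (w + 1)) := by
    symm
    apply Finset.sum_subset (Finset.range_subset_range.mpr h)
    intro x _ hx; simp only [mem_range, not_lt] at hx; omega
  have h1 : ∑ w ∈ range L, (L - (w + 1)) = ∑ w ∈ range L, w := by
    rw [← Finset.sum_range_reflect (fun w => L - (w + 1)) L]
    refine Finset.sum_congr rfl fun j hj => ?_
    simp only [mem_range] at hj; omega
  have h2 : (∑ w ∈ range L, w) * 2 = L.choose 2 * 2 := by
    rw [Finset.sum_range_id_mul_two, two_choose_two]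
  omega

lemma sub_sum_le {n : ℕ} (L : Fin n → ℕ) (c : ℕ) :
    (∑ t, L t) - n * c ≤ ∑ t, (L t - c) := by
  rw [tsub_le_iff_right]
  calc ∑ t, L t ≤ ∑ t, ((L t - c) + c) :=
        Finset.sum_le_sum (fun t _ => le_tsub_add)
    _ = (∑ t, (L t - c)) + n * c := by
        rw [Finset.sum_add_distrib, Finset.sum_const, card_univ, Fintype.card_fin,
          smul_eq_mul]

lemma bal_sub_sum (n m c : ℕ) (hn : 0 < n) :
    (∑ j : Fin n, (bal n m (j : ℕ) - c)) = m - n * c := by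
  unfold bal
  have h : ∀ j : Fin n, ((if (j : ℕ) < m % n then m / n + 1 else m / n) - c)
      = if (j : ℕ) < m % n then (m / n + 1 - c) else (m / n - c) := by
    intro j; split <;> rfl
  rw [Finset.sum_congr rfl (fun j _ => h j),
    sum_fin_ite n (m % n) _ _ (le_of_lt (Nat.mod_lt m hn))]
  have h1 := Nat.div_add_mod m n
  have h2 : m % n < n := Nat.mod_lt m hn
  set q := m / n
  set r := m % n
  rcases le_or_gt c q with hc | hc
  · obtain ⟨e, he⟩ : ∃ e, q = c + e := ⟨q - c, by omega⟩
    have e1 : q + 1 - c = e + 1 := by omega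
    have e2 : q - c = e := by omega
    rw [e1, e2]
    have e3 : r * (e + 1) + (n - r) * e = (r + (n - r)) * e + r := by ring
    rw [e3]
    have e4 : r + (n - r) = n := by omega
    rw [e4]
    have e5 : n * q = n * c + n * e := by rw [he]; ring
    omega
  · have e1 : q + 1 - c = 0 := by omega
    have e2 : q - c = 0 := by omega
    rw [e1, e2]
    have e3 : m < n * c := by
      have : n * q + n ≤ n * c := by
        have : q + 1 ≤ c := hc
        calc n * q + n = n * (q + 1) := by ring
          _ ≤ n * c := Nat.mul_le_mul_left n this
      omega
    omega

lemma turan_key {n : ℕ} (hn : 0 < n) (L : Fin n → ℕ) :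
    tbar n (∑ t, L t) ≤ ∑ t, (L t).choose 2 := by
  set m := ∑ t, L t with hm
  have hLle : ∀ t, L t ≤ m :=
    fun t => Finset.single_le_sum (f := L) (fun _ _ => Nat.zero_le _) (mem_univ t)
  have hbal_le : ∀ t : Fin n, bal n m (t : ℕ) ≤ m := by
    intro t; unfold bal
    have h1 := Nat.div_add_mod m n
    have h2 : m / n ≤ n * (m / n) := Nat.le_mul_of_pos_left _ hn
    split
    · omega
    · omega
  calc tbar n m = ∑ t : Fin n, (bal n m (t : ℕ)).choose 2 := (sumC_bal n m hn).symm
    _ = ∑ t : Fin n, ∑ w ∈ range m, (bal n m (t : ℕ) - (w + 1)) :=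
        Finset.sum_congr rfl fun t _ => choose_two_eq_sum_range _ _ (hbal_le t)
    _ = ∑ w ∈ range m, ∑ t : Fin n, (bal n m (t : ℕ) - (w + 1)) := Finset.sum_comm
    _ = ∑ w ∈ range m, (m - n * (w + 1)) :=
        Finset.sum_congr rfl fun w _ => bal_sub_sum n m (w + 1) hn
    _ ≤ ∑ w ∈ range m, ∑ t : Fin n, (L t - (w + 1)) := by
        refine Finset.sum_le_sum fun w _ => ?_
        rw [hm]; exact sub_sum_le L (w + 1)
    _ = ∑ t : Fin n, ∑ w ∈ range m, (L t - (w + 1)) := Finset.sum_comm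
    _ = ∑ t, (L t).choose 2 :=
        Finset.sum_congr rfl fun t _ => (choose_two_eq_sum_range _ _ (hLle t)).symm

lemma tbar_zero_right (n : ℕ) : tbar n 0 = 0 := by
  simp [tbar]

lemma tbar_succ_le (n m a : ℕ) (h0 : n = 0 → m = 0) :
    tbar (n + 1) (m + (a + 1)) ≤ tbar n m + (a + 1).choose 2 := by
  rcases Nat.eq_zero_or_pos n with hn | hn
  · subst hn
    have hm := h0 rfl; subst hm
    have h1 : tbar 1 (a + 1) = (a + 1).choose 2 := by
      simp [tbar, Nat.mod_one, Nat.div_one]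
    simpa [tbar_zero_right] using le_of_eq h1
  · have key := turan_key (n := n + 1) (Nat.succ_pos n)
      (Fin.cons (a + 1) (fun t : Fin n => bal n m (t : ℕ)))
    rw [Fin.sum_univ_succ] at key
    rw [Fin.sum_univ_succ (fun t => ((Fin.cons (a + 1)
      (fun t : Fin n => bal n m (t : ℕ)) : Fin (n+1) → ℕ) t).choose 2)] at key
    simp only [Fin.cons_zero, Fin.cons_succ] at key
    rw [sum_bal n m hn, sumC_bal n m hn] at key
    calc tbar (n + 1) (m + (a + 1)) = tbar (n + 1) ((a + 1) + m) := by rw [add_comm m (a + 1)]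
      _ ≤ (a + 1).choose 2 + tbar n m := key
      _ = tbar n m + (a + 1).choose 2 := by rw [add_comm]


lemma sq_sub (x : ℕ) : x * x - x = x * (x - 1) := by
  rcases x with _ | t
  · rfl
  · have h : (t + 1) * (t + 1) = (t + 1) * t + (t + 1) := by ring
    simp only [Nat.succ_sub_one]
    omega

lemma two_tbar_succ (nn qq rr : ℕ) (h : rr < nn) :
    2 * tbar nn (nn * qq + rr + 1)
      = rr * ((qq + 1) * qq) + (nn - rr) * (qq * (qq - 1)) + 2 * qq := by
  have hAB : (qq + 1) * qq = qq * (qq - 1) + 2 * qq := by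
    rcases qq with _ | t
    · rfl
    · simp only [Nat.succ_sub_one]; ring
  have hn0 : 0 < nn := by omega
  have c1 := two_choose_two (qq + 1)
  have c2 := two_choose_two qq
  simp only [Nat.add_sub_cancel] at c1
  rcases Nat.lt_or_ge (rr + 1) nn with hlt | hge
  · -- rr + 1 < nn
    have hdiv : (nn * qq + (rr + 1)) / nn = qq := by
      rw [Nat.mul_add_div hn0, Nat.div_eq_of_lt hlt, add_zero]
    have hmod : (nn * qq + (rr + 1)) % nn = rr + 1 := by
      rw [Nat.mul_add_mod, Nat.mod_eq_of_lt hlt]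
    have e : nn * qq + rr + 1 = nn * qq + (rr + 1) := by ring
    rw [e]
    unfold tbar
    rw [hdiv, hmod]
    obtain ⟨d, hd⟩ : ∃ d, nn = rr + 1 + (d + 1) := ⟨nn - rr - 2, by omega⟩
    have e1 : nn - (rr + 1) = d + 1 := by omega
    have e2 : nn - rr = d + 2 := by omega
    rw [e1, e2]
    have expand : 2 * ((rr + 1) * (qq + 1).choose 2 + (d + 1) * qq.choose 2)
        = rr * ((qq + 1).choose 2 * 2) + ((qq + 1).choose 2 * 2)
          + d * (qq.choose 2 * 2) + (qq.choose 2 * 2) := by ring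
    rw [expand, c1, c2, hAB]
    ring
  · -- rr + 1 = nn
    have heq : nn = rr + 1 := by omega
    subst heq
    have e : (rr + 1) * qq + rr + 1 = (rr + 1) * (qq + 1) + 0 := by ring
    rw [e]
    unfold tbar
    have hdiv : ((rr + 1) * (qq + 1) + 0) / (rr + 1) = qq + 1 := by
      rw [Nat.mul_add_div (Nat.succ_pos rr), Nat.zero_div, add_zero]
    have hmod : ((rr + 1) * (qq + 1) + 0) % (rr + 1) = 0 := by
      rw [Nat.mul_add_mod, Nat.zero_mod]
    rw [hdiv, hmod]
    have e1 : rr + 1 - rr = 1 := by omega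
    rw [e1]
    simp only [Nat.zero_mul, zero_add, Nat.sub_zero]
    have expand : 2 * ((rr + 1) * (qq + 1).choose 2)
        = rr * ((qq + 1).choose 2 * 2) + ((qq + 1).choose 2 * 2) := by ring
    rw [expand, c1, hAB]
    ring

lemma Ei_add (nn qq rr : ℕ) (h : rr < nn) :
    rr * ((qq + 1) * qq) + (nn - rr) * (qq * (qq - 1)) + (nn - rr) * qq
      = (nn * qq + rr) * qq := by
  obtain ⟨d, rfl⟩ : ∃ d, nn = rr + (d + 1) := ⟨nn - rr - 1, by omega⟩
  have e1 : rr + (d + 1) - rr = d + 1 := by omega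
  rw [e1]
  rcases qq with _ | t
  · simp
  · simp only [Nat.succ_sub_one]
    ring

section Graph

variable {M K : ℕ}

def pcs (f : Sym2 (Fin M) → Fin K) (i : Fin K) (s : Finset (Fin M)) :
    Finset (Fin M × Fin M) :=
  s.offDiag.filter (fun p => f s(p.1, p.2) = i)

lemma pcs_mono (f : Sym2 (Fin M) → Fin K) (i : Fin K) {s t : Finset (Fin M)}
    (h : s ⊆ t) : pcs f i s ⊆ pcs f i t := by
  intro p hp
  simp only [pcs, mem_filter, mem_offDiag] at hp ⊢
  exact ⟨⟨h hp.1.1, h hp.1.2.1, hp.1.2.2⟩, hp.2⟩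

lemma pcs_sum_card (f : Sym2 (Fin M) → Fin K) :
    (∑ i : Fin K, (pcs f i univ).card) + M = M * M := by
  have h1 : (univ : Finset (Fin M)).offDiag.card
      = ∑ i : Fin K, (pcs f i univ).card := by
    apply Finset.card_eq_sum_card_fiberwise
      (f := fun p : Fin M × Fin M => f s(p.1, p.2)) (t := univ)
    exact fun _ _ => mem_univ _
  have h2 : (univ : Finset (Fin M)).offDiag.card = M * M - M := by
    rw [Finset.offDiag_card, card_univ, Fintype.card_fin]
  have h3 : M ≤ M * M := by
    rcases Nat.eq_zero_or_pos M with h | h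
    · omega
    · exact Nat.le_mul_of_pos_left M h
  omega

lemma indep_zero_empty (f : Sym2 (Fin M) → Fin K) (i : Fin K) (s : Finset (Fin M))
    (h : ∀ u ⊆ s, (∀ x ∈ u, ∀ y ∈ u, x ≠ y → f s(x, y) ≠ i) → u.card ≤ 0) :
    s = ∅ := by
  rcases s.eq_empty_or_nonempty with rfl | ⟨x, hx⟩
  · rfl
  · have h1 := h {x} (by simpa using hx) ?_
    · simp at h1
    · intro a ha b hb hab
      rw [mem_singleton] at ha hb
      subst ha; subst hb; exact absurd rfl hab

lemma turan_bound (f : Sym2 (Fin M) → Fin K) (i : Fin K) :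
    ∀ n (s : Finset (Fin M)),
      (∀ u ⊆ s, (∀ x ∈ u, ∀ y ∈ u, x ≠ y → f s(x, y) ≠ i) → u.card ≤ n) →
      2 * tbar n s.card ≤ (pcs f i s).card := by
  intro n
  induction n with
  | zero =>
    intro s hs
    rw [indep_zero_empty f i s hs]
    simp [tbar_zero_right]
  | succ n IH =>
    intro s hs
    rcases s.eq_empty_or_nonempty with rfl | hne
    · simp [tbar_zero_right]
    obtain ⟨x, hxs, hmin⟩ := Finset.exists_min_image s
      (fun v => ((s.erase v).filter (fun y => f s(v, y) = i)).card) hne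
    set dg := fun v => ((s.erase v).filter (fun y => f s(v, y) = i)).card with hdg
    set D := (s.erase x).filter (fun y => f s(x, y) = i) with hD
    set T := insert x D with hT
    have hDsub : D ⊆ s := (filter_subset _ _).trans (erase_subset _ _)
    have hxD : x ∉ D := fun hmem => (mem_erase.mp (mem_filter.mp hmem).1).1 rfl
    have hTsub : T ⊆ s := insert_subset hxs hDsub
    have hTcard : T.card = dg x + 1 := by
      rw [hT, card_insert_of_notMem hxD]
    set s' := s \ T with hs'
    have hs'sub : s' ⊆ s := sdiff_subset
    have hcards : s.card = s'.card + (dg x + 1) := by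
      rw [hs', card_sdiff_of_subset hTsub]
      have := card_le_card hTsub
      omega
    have hind' : ∀ u ⊆ s', (∀ a ∈ u, ∀ b ∈ u, a ≠ b → f s(a, b) ≠ i) → u.card ≤ n := by
      intro u hu hindep
      have hxu : x ∉ u := by
        intro hxu
        have := hu hxu
        rw [hs', mem_sdiff] at this
        exact this.2 (mem_insert_self _ _)
      have hkey : (insert x u).card ≤ n + 1 := by
        apply hs (insert x u) (insert_subset hxs (hu.trans hs'sub))
        intro a ha b hb hab
        rcases mem_insert.mp ha with rfl | ha' <;> rcases mem_insert.mp hb with rfl | hb'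
        · exact absurd rfl hab
        · -- a = x, b ∈ u
          intro hfi
          have hbs' := hu hb'
          rw [hs', mem_sdiff] at hbs'
          apply hbs'.2
          rw [hT]
          apply mem_insert_of_mem
          rw [hD, mem_filter, mem_erase]
          exact ⟨⟨fun hbx => hab hbx.symm, hbs'.1⟩, hfi⟩
        · -- b = x, a ∈ u
          intro hfi
          have has' := hu ha'
          rw [hs', mem_sdiff] at has'
          apply has'.2
          rw [hT]
          apply mem_insert_of_mem
          rw [hD, mem_filter, mem_erase]
          refine ⟨⟨fun hax => hab hax, has'.1⟩, ?_⟩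
          rw [Sym2.eq_swap]; exact hfi
        · exact hindep a ha' b hb' hab
      rw [card_insert_of_notMem hxu] at hkey
      omega
    have hIH := IH s' hind'
    have hs'0 : n = 0 → s'.card = 0 := by
      intro hn0
      subst hn0
      rw [indep_zero_empty f i s' hind']
      rfl
    have hnum : 2 * tbar (n + 1) s.card ≤ 2 * tbar n s'.card + (dg x + 1) * (dg x) := by
      rw [hcards]
      have h1 := tbar_succ_le n s'.card (dg x) hs'0
      have h2 := two_choose_two (dg x + 1)
      simp only [Nat.add_sub_cancel] at h2
      omega
    set Y := T.biUnion (fun v => ((s.erase v).filter (fun y => f s(v, y) = i)).image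
      (fun y => (v, y))) with hY
    have hYcard : Y.card = ∑ v ∈ T, dg v := by
      rw [hY, Finset.card_biUnion]
      · refine Finset.sum_congr rfl fun v _ => ?_
        exact Finset.card_image_of_injective _ (fun a b hab => congrArg Prod.snd hab)
      · intro a _ b _ hab
        rw [Function.onFun, Finset.disjoint_left]
        intro p hp hq
        rw [mem_image] at hp hq
        obtain ⟨y1, _, rfl⟩ := hp
        obtain ⟨y2, _, he⟩ := hq
        exact hab (congrArg Prod.fst he).symm
    have hYsum : (dg x + 1) * dg x ≤ Y.card := by
      rw [hYcard]
      calc (dg x + 1) * dg x = T.card • dg x := by rw [hTcard, smul_eq_mul]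
        _ ≤ ∑ v ∈ T, dg v := Finset.card_nsmul_le_sum T dg _ (fun v hv => hmin v (hTsub hv))
    have hYsubset : Y ⊆ pcs f i s := by
      intro p hp
      rw [hY, mem_biUnion] at hp
      obtain ⟨v, hvT, hp⟩ := hp
      rw [mem_image] at hp
      obtain ⟨y, hy, rfl⟩ := hp
      rw [mem_filter, mem_erase] at hy
      rw [pcs, mem_filter, mem_offDiag]
      exact ⟨⟨hTsub hvT, hy.1.2, fun hvy => hy.1.1 hvy.symm⟩, hy.2⟩
    have hdisj : Disjoint (pcs f i s') Y := by
      rw [Finset.disjoint_left]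
      intro p hp hpY
      rw [pcs, mem_filter, mem_offDiag] at hp
      have hp1 : p.1 ∈ s' := hp.1.1
      rw [hY, mem_biUnion] at hpY
      obtain ⟨v, hvT, hpv⟩ := hpY
      rw [mem_image] at hpv
      obtain ⟨y, _, rfl⟩ := hpv
      rw [hs', mem_sdiff] at hp1
      exact hp1.2 hvT
    have hsub2 : pcs f i s' ∪ Y ⊆ pcs f i s :=
      union_subset (pcs_mono f i hs'sub) hYsubset
    have hcount : (pcs f i s').card + (dg x + 1) * dg x ≤ (pcs f i s).card := by
      have h1 := Finset.card_union_of_disjoint hdisj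
      have h2 := card_le_card hsub2
      omega
    omega

end Graph

section Fact

variable {N k : ℕ}

open scoped Classical in
noncomputable def factColor (hk : 0 < k) (H : Fin k → SimpleGraph (Fin N))
    (hfac : IsFactorization H) : Sym2 (Fin N) → Fin k :=
  Sym2.lift ⟨fun x y => if h : ∃ j, (H j).Adj x y then h.choose else ⟨0, hk⟩, by
    intro x y
    by_cases hxy : x = y
    · subst hxy; rfl
    · obtain ⟨j, hj, hu⟩ := hfac x y hxy
      have h1 : ∃ j, (H j).Adj x y := ⟨j, hj⟩
      have h2 : ∃ j, (H j).Adj y x := ⟨j, hj.symm⟩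
      simp only [dif_pos h1, dif_pos h2]
      rw [hu _ h1.choose_spec, hu _ h2.choose_spec.symm]⟩

open scoped Classical in
lemma factColor_iff (hk : 0 < k) (H : Fin k → SimpleGraph (Fin N))
    (hfac : IsFactorization H) {x y : Fin N} (hxy : x ≠ y) (i : Fin k) :
    factColor hk H hfac s(x, y) = i ↔ (H i).Adj x y := by
  obtain ⟨j, hj, hu⟩ := hfac x y hxy
  have hex : ∃ j, (H j).Adj x y := ⟨j, hj⟩
  rw [factColor, Sym2.lift_mk]
  simp only [dif_pos hex]
  constructor
  · rintro rfl
    exact hex.choose_spec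
  · intro hAdj
    rw [hu _ hex.choose_spec, hu _ hAdj]

end Fact

end CRAux

/-- If `K_N` is factorable into `H₁, …, H_k` with
`H_i ≅ r_i K_{q_i + 1} ∪ (n_i - r_i) K_{q_i}`, `N = n_i q_i + r_i`,
`0 ≤ r_i < n_i`, and `(n_i - r_i - 1) q_i > 0` for some `i`, then
`R̄(n₁ + 1, …, n_k + 1) = N + 1`. -/


theorem cRamsey_eq_of_cliquePartition_factorization (N k : ℕ) (hN : 1 < N)
    (hk : 0 < k) (H : Fin k → SimpleGraph (Fin N)) (n q r : Fin k → ℕ)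
    (hfac : IsFactorization H)
    (hiso : ∀ i, IsCliquePartition (H i) (n i) (q i) (r i))
    (hN' : ∀ i, N = n i * q i + r i) (hr : ∀ i, r i < n i)
    (hpos : ∃ i, 0 < (n i - r i - 1) * q i) :
    cRamsey (fun i => n i + 1) = N + 1 := by

  classical
  set f0 := CRAux.factColor hk H hfac with hf0
  -- the factorization coloring has no large independent sets
  have hbad0 : ∀ i, ¬ HasIndep f0 i (n i + 1) := by
    intro i hind
    obtain ⟨s, hcard, hindep⟩ := hind
    obtain ⟨P, hPadj, hPcard⟩ := hiso i
    have hlt : (univ : Finset (Fin (n i))).card < s.card := by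
      rw [card_univ, Fintype.card_fin, hcard]; omega
    obtain ⟨x, hx, y, hy, hxy, hPxy⟩ :=
      Finset.exists_ne_map_eq_of_card_lt_of_maps_to hlt (fun a _ => mem_univ (P a))
    exact hindep x hx y hy hxy
      ((CRAux.factColor_iff hk H hfac hxy i).mpr ((hPadj x y).mpr ⟨hxy, hPxy⟩))
  -- evaluation of the color classes of the factorization coloring
  have hEi : ∀ i, (CRAux.pcs f0 i univ).card
      = r i * ((q i + 1) * q i) + (n i - r i) * (q i * (q i - 1)) := by
    intro i
    obtain ⟨P, hPadj, hPcard⟩ := hiso i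
    rw [CRAux.pcs]
    rw [Finset.card_eq_sum_card_fiberwise
      (f := fun p : Fin N × Fin N => P p.1) (t := (univ : Finset (Fin (n i))))
      (fun _ _ => mem_univ _)]
    have hfib : ∀ j : Fin (n i),
        ((univ.offDiag.filter (fun p : Fin N × Fin N => f0 s(p.1, p.2) = i)).filter
          (fun p => P p.1 = j))
        = (univ.filter (fun v => P v = j)).offDiag := by
      intro j
      ext p
      simp only [mem_filter, mem_offDiag, mem_univ, true_and]
      constructor
      · rintro ⟨⟨hne, hcol⟩, hPj⟩
        have hadj := (CRAux.factColor_iff hk H hfac hne i).mp hcol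
        have h2 := ((hPadj p.1 p.2).mp hadj).2
        exact ⟨hPj, h2 ▸ hPj, hne⟩
      · rintro ⟨hP1, hP2, hne⟩
        exact ⟨⟨hne, (CRAux.factColor_iff hk H hfac hne i).mpr
          ((hPadj p.1 p.2).mpr ⟨hne, hP1.trans hP2.symm⟩)⟩, hP1⟩
    rw [Finset.sum_congr rfl (fun j _ => by rw [hfib j, Finset.offDiag_card, hPcard j])]
    have hsplit : ∀ j : Fin (n i),
        ((if (j : ℕ) < r i then q i + 1 else q i) * (if (j : ℕ) < r i then q i + 1 else q i)
          - (if (j : ℕ) < r i then q i + 1 else q i))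
        = if (j : ℕ) < r i then (q i + 1) * (q i) else (q i) * (q i - 1) := by
      intro j
      split
      · rw [CRAux.sq_sub]; simp
      · rw [CRAux.sq_sub]
    rw [Finset.sum_congr rfl (fun j _ => hsplit j)]
    exact CRAux.sum_fin_ite _ _ _ _ (le_of_lt (hr i))
  have hglob := CRAux.pcs_sum_card f0
  have hE : (∑ i, (r i * ((q i + 1) * q i) + (n i - r i) * (q i * (q i - 1)))) + N
      = N * N := by
    rw [← Finset.sum_congr rfl (fun i (_ : i ∈ univ) => hEi i)]
    exact hglob
  -- upper bound : N + 1 is in the defining set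
  have hmem : (N + 1) ∈ {M : ℕ | ∀ f : Sym2 (Fin M) → Fin k, ∃ i : Fin k,
      HasIndep f i (n i + 1)} := by
    intro f
    by_contra hc
    push_neg at hc
    have h1 : ∀ i, 2 * tbar (n i) (N + 1) ≤ (CRAux.pcs f i univ).card := by
      intro i
      have hhyp : ∀ u ⊆ (univ : Finset (Fin (N + 1))),
          (∀ x ∈ u, ∀ y ∈ u, x ≠ y → f s(x, y) ≠ i) → u.card ≤ n i := by
        intro u _ hindep
        by_contra hgt
        push_neg at hgt
        obtain ⟨u', hu'sub, hu'card⟩ := Finset.exists_subset_card_eq hgt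
        exact hc i ⟨u', hu'card,
          fun x hx y hy hxy => hindep x (hu'sub hx) y (hu'sub hy) hxy⟩
      have := CRAux.turan_bound f i (n i) univ hhyp
      rwa [card_univ, Fintype.card_fin] at this
    have h2 := CRAux.pcs_sum_card f
    have h3 : ∑ i, 2 * tbar (n i) (N + 1) ≤ ∑ i, (CRAux.pcs f i univ).card :=
      Finset.sum_le_sum (fun i _ => h1 i)
    have h4 : ∀ i : Fin k, 2 * tbar (n i) (N + 1)
        = r i * ((q i + 1) * q i) + (n i - r i) * (q i * (q i - 1)) + 2 * q i := by
      intro i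
      have := CRAux.two_tbar_succ (n i) (q i) (r i) (hr i)
      rwa [← hN' i] at this
    have h5 : ∑ i, 2 * tbar (n i) (N + 1)
        = (∑ i, (r i * ((q i + 1) * q i) + (n i - r i) * (q i * (q i - 1))))
          + 2 * ∑ i, q i := by
      rw [Finset.sum_congr rfl (fun i (_ : i ∈ univ) => h4 i), Finset.sum_add_distrib,
        Finset.mul_sum]
    set SE := ∑ i, (r i * ((q i + 1) * q i) + (n i - r i) * (q i * (q i - 1))) with hSE
    set Q := ∑ i, q i with hQ
    have hNN1 : (N + 1) * (N + 1) = N * N + 2 * N + 1 := by ring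
    have hQN : Q ≤ N := by omega
    have hTle : ∀ i : Fin k, q i ≤ (n i - r i) * q i := fun i =>
      Nat.le_mul_of_pos_left (q i) (by have := hr i; omega)
    obtain ⟨i0, hi0⟩ := hpos
    have hTstrict : q i0 < (n i0 - r i0) * q i0 := by
      have hd : n i0 - r i0 = (n i0 - r i0 - 1) + 1 := by
        have := hr i0; omega
      rw [hd, add_one_mul]
      omega
    have hT : Q + 1 ≤ ∑ i, (n i - r i) * q i := by
      have := Finset.sum_lt_sum (fun i (_ : i ∈ univ) => hTle i) ⟨i0, mem_univ i0, hTstrict⟩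
      omega
    have hNQ : SE + ∑ i, (n i - r i) * q i = N * Q := by
      rw [hSE, ← Finset.sum_add_distrib]
      rw [Finset.sum_congr rfl
        (fun i (_ : i ∈ univ) => by rw [CRAux.Ei_add (n i) (q i) (r i) (hr i), ← hN' i])]
      rw [hQ, Finset.mul_sum]
    have hP1 : N * Q ≤ N * N := Nat.mul_le_mul_left N hQN
    have hQ1 : Q + 1 ≤ N := by omega
    have hP2 : N * (Q + 1) ≤ N * N := Nat.mul_le_mul_left N hQ1
    have hP3 : N * (Q + 1) = N * Q + N := by ring
    omega
  -- lower bound : no M' ≤ N is in the defining set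
  have hnotS : ∀ M', M' ≤ N →
      ¬ (∀ f : Sym2 (Fin M') → Fin k, ∃ i : Fin k, HasIndep f i (n i + 1)) := by
    intro M' hM' hall
    obtain ⟨i, s, hcard, hind⟩ := hall (fun e => f0 (e.map (Fin.castLE hM')))
    apply hbad0 i
    refine ⟨s.map ⟨Fin.castLE hM', Fin.castLE_injective hM'⟩, by rw [card_map, hcard], ?_⟩
    intro x hx y hy hxy
    rw [mem_map] at hx hy
    obtain ⟨a, ha, rfl⟩ := hx
    obtain ⟨b, hb, rfl⟩ := hy
    have hab : a ≠ b := by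
      intro hab'; apply hxy; rw [hab']
    have := hind a ha b hb hab
    simpa [Sym2.map_pair_eq] using this
  -- conclusion
  apply le_antisymm
  · exact Nat.sInf_le hmem
  · refine le_csInf ⟨N + 1, hmem⟩ ?_
    intro M' hM'
    by_contra hlt
    push_neg at hlt
    exact hnotS M' (by omega) hM'
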